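/- Assume ‖ν(z)‖ = 1 for all z ∈ Γ, the flatness hypothesis (Flat) with constant c_ν > 0, and the boundedness hypothesis (Bdd) with constant d > 0. Then for all x, y ∈ Γ with x ≠ y, |p(x,y)| ≤ 1/(4π‖x−y‖³) + 3c_ν²/(4π‖x−y‖), and consequently |p(x,y)| ≤ (1 + 12 c_ν² d²)/(4π ‖x−y‖³). -/

import Mathlib

open scoped RealInnerProductSpace

/-- The second mixed normal derivative of the Laplace fundamental solution:
`p(x,y) = (ν(x)·ν(y))/(4π‖x−y‖³) − 3(ν(y)·(x−y))(ν(x)·(x−y))/(4π‖x−y‖⁵)`. -/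
noncomputable def laplaceHyperKernel
    (ν : EuclideanSpace ℝ (Fin 3) → EuclideanSpace ℝ (Fin 3))
    (x y : EuclideanSpace ℝ (Fin 3)) : ℝ :=
  ⟪ν x, ν y⟫ / (4 * Real.pi * ‖x - y‖ ^ 3)
    - 3 * (⟪ν y, x - y⟫ * ⟪ν x, x - y⟫) / (4 * Real.pi * ‖x - y‖ ^ 5)

theorem kernel_p_bound
    (Γ : Set (EuclideanSpace ℝ (Fin 3)))
    (ν : EuclideanSpace ℝ (Fin 3) → EuclideanSpace ℝ (Fin 3))
    (hν : ∀ z ∈ Γ, ‖ν z‖ = 1)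
    (c_ν : ℝ) (hc : 0 < c_ν)
    (hFlat : ∀ x ∈ Γ, ∀ y ∈ Γ,
      |⟪ν x, x - y⟫| ≤ c_ν * ‖x - y‖ ^ 2 ∧ |⟪ν y, x - y⟫| ≤ c_ν * ‖x - y‖ ^ 2)
    (d : ℝ) (hd : 0 < d)
    (hBdd : ∀ z ∈ Γ, ‖z‖ ≤ d)
    (x y : EuclideanSpace ℝ (Fin 3)) (hx : x ∈ Γ) (hy : y ∈ Γ) (hxy : x ≠ y) :
    |laplaceHyperKernel ν x y|
        ≤ 1 / (4 * Real.pi * ‖x - y‖ ^ 3) + 3 * c_ν ^ 2 / (4 * Real.pi * ‖x - y‖)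
    ∧ |laplaceHyperKernel ν x y|
        ≤ (1 + 12 * c_ν ^ 2 * d ^ 2) / (4 * Real.pi * ‖x - y‖ ^ 3) := by
  have hr : (0:ℝ) < ‖x - y‖ := by
    rw [norm_pos_iff]; exact sub_ne_zero.mpr hxy
  set r := ‖x - y‖ with hrdef
  have hπ : (0:ℝ) < Real.pi := Real.pi_pos
  -- inner product bound
  have h1 : |⟪ν x, ν y⟫| ≤ 1 := by
    calc |⟪ν x, ν y⟫| ≤ ‖ν x‖ * ‖ν y‖ := abs_real_inner_le_norm _ _
    _ = 1 := by rw [hν x hx, hν y hy]; ring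
  obtain ⟨hfx, hfy⟩ := hFlat x hx y hy
  have hprod : |⟪ν y, x - y⟫ * ⟪ν x, x - y⟫| ≤ c_ν ^ 2 * r ^ 4 := by
    rw [abs_mul]
    calc |⟪ν y, x - y⟫| * |⟪ν x, x - y⟫| ≤ (c_ν * r ^ 2) * (c_ν * r ^ 2) :=
      mul_le_mul hfy hfx (abs_nonneg _) (by positivity)
    _ = c_ν ^ 2 * r ^ 4 := by ring
  have hmain : |laplaceHyperKernel ν x y|
      ≤ 1 / (4 * Real.pi * r ^ 3) + 3 * c_ν ^ 2 / (4 * Real.pi * r) := by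
    unfold laplaceHyperKernel
    refine (abs_sub _ _).trans ?_
    gcongr ?_ + ?_
    · rw [abs_div, abs_of_pos (by positivity : (0:ℝ) < 4 * Real.pi * r ^ 3)]
      exact div_le_div_of_nonneg_right h1 (by positivity) |>.trans_eq rfl
    · rw [abs_div, abs_of_pos (by positivity : (0:ℝ) < 4 * Real.pi * r ^ 5), abs_mul,
        abs_of_nonneg (by norm_num : (0:ℝ) ≤ 3)]
      rw [div_le_div_iff₀ (by positivity) (by positivity)]
      calc 3 * |⟪ν y, x - y⟫ * ⟪ν x, x - y⟫| * (4 * Real.pi * r)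
          ≤ 3 * (c_ν ^ 2 * r ^ 4) * (4 * Real.pi * r) := by
            gcongr
        _ = 3 * c_ν ^ 2 * (4 * Real.pi * r ^ 5) := by ring
  refine ⟨hmain, hmain.trans ?_⟩
  have hr2d : r ≤ 2 * d := by
    calc r = ‖x - y‖ := rfl
    _ ≤ ‖x‖ + ‖y‖ := norm_sub_le _ _
    _ ≤ d + d := add_le_add (hBdd x hx) (hBdd y hy)
    _ = 2 * d := by ring
  have : 3 * c_ν ^ 2 / (4 * Real.pi * r) ≤ 12 * c_ν ^ 2 * d ^ 2 / (4 * Real.pi * r ^ 3) := by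
    rw [div_le_div_iff₀ (by positivity) (by positivity)]
    calc 3 * c_ν ^ 2 * (4 * Real.pi * r ^ 3) = 3 * c_ν ^ 2 * r ^ 2 * (4 * Real.pi * r) := by ring
    _ ≤ 3 * c_ν ^ 2 * ((2*d) ^ 2) * (4 * Real.pi * r) := by gcongr
    _ = 12 * c_ν ^ 2 * d ^ 2 * (4 * Real.pi * r) := by ring
  calc 1 / (4 * Real.pi * r ^ 3) + 3 * c_ν ^ 2 / (4 * Real.pi * r)
      ≤ 1 / (4 * Real.pi * r ^ 3) + 12 * c_ν ^ 2 * d ^ 2 / (4 * Real.pi * r ^ 3) :=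
        add_le_add_right this _
    _ = (1 + 12 * c_ν ^ 2 * d ^ 2) / (4 * Real.pi * r ^ 3) := by rw [← add_div]
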